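/- Let R be a commutative ring with ideals A, B and n ≥ 3. If a ∈ A and b ∈ B with either a ∈ AB or b ∈ AB, then [Eᵢⱼ(a), Eⱼᵢ(b)] ∈ E(n,R,AB) for all i ≠ j. In particular [Eᵢⱼ(a b₁), Eⱼᵢ(b₂)] ∈ E(n,R,AB) for a ∈ A, b₁, b₂ ∈ B. -/

import Mathlib

def elemSL (n : ℕ) (R : Type*) [CommRing R] (i j : Fin n) (hij : i ≠ j) (t : R) :
    Matrix.SpecialLinearGroup (Fin n) R :=
  ⟨Matrix.transvection i j t, Matrix.det_transvection_of_ne i j hij t⟩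

/-- The (absolute) elementary subgroup `E(n,R)`. -/
def elemGroup (n : ℕ) (R : Type*) [CommRing R] :
    Subgroup (Matrix.SpecialLinearGroup (Fin n) R) :=
  Subgroup.closure {x | ∃ (i j : Fin n) (h : i ≠ j) (t : R), x = elemSL n R i j h t}

/-- The unrelativised elementary subgroup `E(n,I)` of level `I`. -/
def elemGroupLevel (n : ℕ) (R : Type*) [CommRing R] (I : Ideal R) :
    Subgroup (Matrix.SpecialLinearGroup (Fin n) R) :=
  Subgroup.closure {x | ∃ (i j : Fin n) (h : i ≠ j), ∃ c ∈ I, x = elemSL n R i j h c}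

/-- The relative elementary subgroup `E(n,R,I)`: the normal closure of `E(n,I)`
in `E(n,R)`, generated by `E(n,R)`-conjugates of elementary matrices of level `I`. -/
def relElemGroup (n : ℕ) (R : Type*) [CommRing R] (I : Ideal R) :
    Subgroup (Matrix.SpecialLinearGroup (Fin n) R) :=
  Subgroup.closure {x | ∃ g ∈ elemGroup n R, ∃ (i j : Fin n) (h : i ≠ j),
    ∃ c ∈ I, x = g * elemSL n R i j h c * g⁻¹}

open scoped commutatorElement

lemma elemSL_mul {n : ℕ} {R : Type*} [CommRing R] (i j : Fin n) (h : i ≠ j) (s t : R) :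
    elemSL n R i j h s * elemSL n R i j h t = elemSL n R i j h (s + t) := by
  apply Subtype.ext
  show (elemSL n R i j h s : Matrix (Fin n) (Fin n) R) * elemSL n R i j h t = _
  exact Matrix.transvection_mul_transvection_same i j h s t

lemma elemSL_inv {n : ℕ} {R : Type*} [CommRing R] (i j : Fin n) (h : i ≠ j) (t : R) :
    (elemSL n R i j h t)⁻¹ = elemSL n R i j h (-t) := by
  apply inv_eq_of_mul_eq_one_right
  rw [elemSL_mul, add_neg_cancel]
  apply Subtype.ext
  simp [elemSL, Matrix.transvection]

lemma elemSL_mem_elemGroup {n : ℕ} {R : Type*} [CommRing R] (i j : Fin n) (h : i ≠ j) (t : R) :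
    elemSL n R i j h t ∈ elemGroup n R :=
  Subgroup.subset_closure ⟨i, j, h, t, rfl⟩

lemma conj_elemSL_mem_relElemGroup {n : ℕ} {R : Type*} [CommRing R] (I : Ideal R)
    (g : Matrix.SpecialLinearGroup (Fin n) R) (hg : g ∈ elemGroup n R)
    (i j : Fin n) (h : i ≠ j) (c : R) (hc : c ∈ I) :
    g * elemSL n R i j h c * g⁻¹ ∈ relElemGroup n R I :=
  Subgroup.subset_closure ⟨g, hg, i, j, h, c, hc, rfl⟩

lemma elemSL_mem_relElemGroup {n : ℕ} {R : Type*} [CommRing R] (I : Ideal R)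
    (i j : Fin n) (h : i ≠ j) (c : R) (hc : c ∈ I) :
    elemSL n R i j h c ∈ relElemGroup n R I := by
  have := conj_elemSL_mem_relElemGroup I 1 (one_mem _) i j h c hc
  simpa using this

lemma key {n : ℕ} {R : Type*} [CommRing R] (I : Ideal R) (i j : Fin n) (hij : i ≠ j)
    (a b : R) (h : a ∈ I ∨ b ∈ I) :
    ⁅elemSL n R i j hij a, elemSL n R j i hij.symm b⁆ ∈ relElemGroup n R I := by
  set x := elemSL n R i j hij a with hx
  set y := elemSL n R j i hij.symm b with hy
  rcases h with ha | hb
  · have h1 : x ∈ relElemGroup n R I := elemSL_mem_relElemGroup I i j hij a ha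
    have h2 : y * elemSL n R i j hij (-a) * y⁻¹ ∈ relElemGroup n R I :=
      conj_elemSL_mem_relElemGroup I y (elemSL_mem_elemGroup _ _ _ _) i j hij (-a)
        (neg_mem ha)
    have : ⁅x, y⁆ = x * (y * elemSL n R i j hij (-a) * y⁻¹) := by
      rw [commutatorElement_def, ← elemSL_inv i j hij a, ← hx]
      group
    rw [this]
    exact mul_mem h1 h2
  · have h1 : x * elemSL n R j i hij.symm b * x⁻¹ ∈ relElemGroup n R I :=
      conj_elemSL_mem_relElemGroup I x (elemSL_mem_elemGroup _ _ _ _) j i hij.symm b hb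
    have h2 : elemSL n R j i hij.symm (-b) ∈ relElemGroup n R I :=
      elemSL_mem_relElemGroup I j i hij.symm (-b) (neg_mem hb)
    have : ⁅x, y⁆ = (x * elemSL n R j i hij.symm b * x⁻¹) * elemSL n R j i hij.symm (-b) := by
      rw [commutatorElement_def, ← elemSL_inv j i hij.symm b, ← hy]
    rw [this]
    exact mul_mem h1 h2

theorem elem_commutator_trivial_of_mem_product (n : ℕ) (hn : 3 ≤ n) (R : Type*) [CommRing R]
    (A B : Ideal R) (i j : Fin n) (hij : i ≠ j) :
    (∀ a b : R, a ∈ A → b ∈ B → (a ∈ A * B ∨ b ∈ A * B) →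
      ⁅elemSL n R i j hij a, elemSL n R j i hij.symm b⁆ ∈ relElemGroup n R (A * B)) ∧
    (∀ a b₁ b₂ : R, a ∈ A → b₁ ∈ B → b₂ ∈ B →
      ⁅elemSL n R i j hij (a * b₁), elemSL n R j i hij.symm b₂⁆ ∈
        relElemGroup n R (A * B)) := by
  constructor
  · intro a b _ _ h
    exact key (A * B) i j hij a b h
  · intro a b₁ b₂ ha hb₁ _
    exact key (A * B) i j hij (a * b₁) b₂ (Or.inl (Ideal.mul_mem_mul ha hb₁))
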